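/- For each m ≥ 2 and k ≥ 1 there is a satisfiable CTL formula φ_{m,k} using only the operators AX and EX, of temporal depth k and length O(k² · m · log m), such that every serial model of φ_{m,k} has at least m^k worlds. -/

import Mathlib

def Serial {W : Type} (R : W → W → Prop) : Prop := ∀ w, ∃ u, R w u

def IsPath {W : Type} (R : W → W → Prop) (π : ℕ → W) : Prop := ∀ i, R (π i) (π (i+1))

structure Kripke (W : Type) where
  R : W → W → Prop
  V : ℕ → W → Prop

inductive CTL where
  | atom : ℕ → CTL
  | neg  : CTL → CTL
  | and  : CTL → CTL → CTL
  | or   : CTL → CTL → CTL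
  | AX : CTL → CTL
  | EX : CTL → CTL
  | AF : CTL → CTL
  | EF : CTL → CTL
  | AG : CTL → CTL
  | EG : CTL → CTL
  | AU : CTL → CTL → CTL
  | EU : CTL → CTL → CTL
  | AR : CTL → CTL → CTL
  | ER : CTL → CTL → CTL
deriving DecidableEq

def sat {W : Type} (K : Kripke W) : CTL → W → Prop
  | .atom p, w => K.V p w
  | .neg φ, w => ¬ sat K φ w
  | .and φ ψ, w => sat K φ w ∧ sat K ψ w
  | .or φ ψ, w => sat K φ w ∨ sat K ψ w
  | .AX φ, w => ∀ π : ℕ → W, IsPath K.R π → π 0 = w → sat K φ (π 1)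
  | .EX φ, w => ∃ π : ℕ → W, IsPath K.R π ∧ π 0 = w ∧ sat K φ (π 1)
  | .AF φ, w => ∀ π : ℕ → W, IsPath K.R π → π 0 = w → ∃ i, sat K φ (π i)
  | .EF φ, w => ∃ π : ℕ → W, IsPath K.R π ∧ π 0 = w ∧ ∃ i, sat K φ (π i)
  | .AG φ, w => ∀ π : ℕ → W, IsPath K.R π → π 0 = w → ∀ i, sat K φ (π i)
  | .EG φ, w => ∃ π : ℕ → W, IsPath K.R π ∧ π 0 = w ∧ ∀ i, sat K φ (π i)
  | .AU φ ψ, w => ∀ π : ℕ → W, IsPath K.R π → π 0 = w →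
      ∃ i, sat K ψ (π i) ∧ ∀ j, j < i → sat K φ (π j)
  | .EU φ ψ, w => ∃ π : ℕ → W, IsPath K.R π ∧ π 0 = w ∧
      ∃ i, sat K ψ (π i) ∧ ∀ j, j < i → sat K φ (π j)
  | .AR φ ψ, w => ∀ π : ℕ → W, IsPath K.R π → π 0 = w →
      ∀ i, sat K ψ (π i) ∨ ∃ j, j < i ∧ sat K φ (π j)
  | .ER φ ψ, w => ∃ π : ℕ → W, IsPath K.R π ∧ π 0 = w ∧
      ∀ i, sat K ψ (π i) ∨ ∃ j, j < i ∧ sat K φ (π j)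

def CTL.len : CTL → ℕ
  | .atom _ => 1
  | .neg φ => φ.len + 1
  | .and φ ψ => φ.len + ψ.len + 1
  | .or φ ψ => φ.len + ψ.len + 1
  | .AX φ => φ.len + 1
  | .EX φ => φ.len + 1
  | .AF φ => φ.len + 1
  | .EF φ => φ.len + 1
  | .AG φ => φ.len + 1
  | .EG φ => φ.len + 1
  | .AU φ ψ => φ.len + ψ.len + 1
  | .EU φ ψ => φ.len + ψ.len + 1
  | .AR φ ψ => φ.len + ψ.len + 1
  | .ER φ ψ => φ.len + ψ.len + 1

def CTL.td : CTL → ℕ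
  | .atom _ => 0
  | .neg φ => φ.td
  | .and φ ψ => max φ.td ψ.td
  | .or φ ψ => max φ.td ψ.td
  | .AX φ => φ.td + 1
  | .EX φ => φ.td + 1
  | .AF φ => φ.td + 1
  | .EF φ => φ.td + 1
  | .AG φ => φ.td + 1
  | .EG φ => φ.td + 1
  | .AU φ ψ => max φ.td ψ.td + 1
  | .EU φ ψ => max φ.td ψ.td + 1
  | .AR φ ψ => max φ.td ψ.td + 1
  | .ER φ ψ => max φ.td ψ.td + 1

/-- The formula uses only the temporal operators `AX` and its dual `EX`. -/
def OnlyAX : CTL → Prop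
  | .atom _ => True
  | .neg φ => OnlyAX φ
  | .and φ ψ => OnlyAX φ ∧ OnlyAX ψ
  | .or φ ψ => OnlyAX φ ∧ OnlyAX ψ
  | .AX φ => OnlyAX φ
  | .EX φ => OnlyAX φ
  | _ => False

namespace AXLB

/-! ### Formula constructions -/

def top : CTL := .or (.atom 0) (.neg (.atom 0))

def lit (p : ℕ) (b : Bool) : CTL := if b then .atom p else .neg (.atom p)

def codeAux (i L v : ℕ) : ℕ → CTL
  | 0 => top
  | t+1 => .and (lit (i*L+t) (v.testBit t)) (codeAux i L v t)

def code (i L v : ℕ) : CTL := codeAux i L v L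

def freeze (p : ℕ) : CTL :=
  .and (.or (.neg (.atom p)) (.AX (.atom p)))
       (.or (.neg (.neg (.atom p))) (.AX (.neg (.atom p))))

def freezeAux (s L : ℕ) : ℕ → CTL
  | 0 => top
  | t+1 => .and (freeze (s*L+t)) (freezeAux s L t)

def freezeBlock (L : ℕ) : ℕ → CTL
  | 0 => top
  | s+1 => .and (freezeAux s L L) (freezeBlock L s)

def exBlock (j L : ℕ) : ℕ → CTL
  | 0 => top
  | v+1 => .and (.EX (code j L v)) (exBlock j L v)

def psi (j L m : ℕ) : CTL := .and (exBlock j L m) (freezeBlock L j)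

def chain (L m : ℕ) : ℕ → ℕ → CTL
  | _, 0 => top
  | j, r+1 => .and (psi j L m) (.AX (chain L m (j+1) r))

/-! ### OnlyAX -/

lemma onlyAX_top : OnlyAX top := by simp [top, OnlyAX]

lemma onlyAX_lit (p b) : OnlyAX (lit p b) := by cases b <;> simp [lit, OnlyAX]

lemma onlyAX_codeAux (i L v n) : OnlyAX (codeAux i L v n) := by
  induction n with
  | zero => exact onlyAX_top
  | succ t ih => exact ⟨onlyAX_lit _ _, ih⟩

lemma onlyAX_freeze (p) : OnlyAX (freeze p) := by simp [freeze, OnlyAX]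

lemma onlyAX_freezeAux (s L n) : OnlyAX (freezeAux s L n) := by
  induction n with
  | zero => exact onlyAX_top
  | succ t ih => exact ⟨onlyAX_freeze _, ih⟩

lemma onlyAX_freezeBlock (L n) : OnlyAX (freezeBlock L n) := by
  induction n with
  | zero => exact onlyAX_top
  | succ t ih => exact ⟨onlyAX_freezeAux _ _ _, ih⟩

lemma onlyAX_exBlock (j L n) : OnlyAX (exBlock j L n) := by
  induction n with
  | zero => exact onlyAX_top
  | succ t ih => exact ⟨onlyAX_codeAux _ _ _ _, ih⟩

lemma onlyAX_chain (L m r j) : OnlyAX (chain L m j r) := by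
  induction r generalizing j with
  | zero => exact onlyAX_top
  | succ r ih => exact ⟨⟨onlyAX_exBlock _ _ _, onlyAX_freezeBlock _ _⟩, ih _⟩

/-! ### Temporal depth -/

lemma td_top : top.td = 0 := rfl

lemma td_lit (p b) : (lit p b).td = 0 := by cases b <;> rfl

lemma td_codeAux (i L v n) : (codeAux i L v n).td = 0 := by
  induction n with
  | zero => rfl
  | succ t ih => simp [codeAux, CTL.td, td_lit, ih]

lemma td_freeze (p) : (freeze p).td = 1 := rfl

lemma td_freezeAux (s L n) : (freezeAux s L n).td ≤ 1 := by
  induction n with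
  | zero => simp [freezeAux, td_top]
  | succ t ih => simp [freezeAux, CTL.td, td_freeze, ih]

lemma td_freezeBlock (L n) : (freezeBlock L n).td ≤ 1 := by
  induction n with
  | zero => simp [freezeBlock, td_top]
  | succ t ih => simp [freezeBlock, CTL.td, td_freezeAux, ih]

lemma td_exBlock (j L n) (hn : 1 ≤ n) : (exBlock j L n).td = 1 := by
  induction n with
  | zero => omega
  | succ t ih =>
    rcases Nat.eq_zero_or_pos t with h | h
    · subst h; simp [exBlock, CTL.td, code, td_codeAux, td_top]
    · simp [exBlock, CTL.td, code, td_codeAux, ih h]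

lemma td_psi (j L m) (hm : 1 ≤ m) : (psi j L m).td = 1 := by
  have h1 := td_freezeBlock L j
  have : (psi j L m).td = max (exBlock j L m).td (freezeBlock L j).td := rfl
  rw [this, td_exBlock j L m hm]
  omega

lemma td_chain (L m : ℕ) (hm : 1 ≤ m) (r j : ℕ) : (chain L m j r).td = r := by
  induction r generalizing j with
  | zero => rfl
  | succ r ih =>
    have : (chain L m j (r+1)).td = max (psi j L m).td ((chain L m (j+1) r).td + 1) := rfl
    rw [this, td_psi _ _ _ hm, ih]
    omega

/-! ### Length -/

lemma len_top : top.len = 4 := rfl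

lemma len_lit (p b) : (lit p b).len ≤ 2 := by cases b <;> simp [lit, CTL.len]

lemma len_codeAux (i L v n) : (codeAux i L v n).len ≤ 3*n + 4 := by
  induction n with
  | zero => simp [codeAux, len_top]
  | succ t ih =>
    have h := len_lit (i*L+t) (v.testBit t)
    have : (codeAux i L v (t+1)).len = (lit (i*L+t) (v.testBit t)).len + (codeAux i L v t).len + 1 := rfl
    omega

lemma len_code (i L v) : (code i L v).len ≤ 3*L + 4 := len_codeAux i L v L

lemma len_freeze (p) : (freeze p).len = 13 := rfl

lemma len_freezeAux (s L n) : (freezeAux s L n).len ≤ 14*n + 4 := by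
  induction n with
  | zero => simp [freezeAux, len_top]
  | succ t ih =>
    have : (freezeAux s L (t+1)).len = (freeze (s*L+t)).len + (freezeAux s L t).len + 1 := rfl
    rw [this, len_freeze]; omega

lemma len_freezeBlock (L n) : (freezeBlock L n).len ≤ n*(14*L+5) + 4 := by
  induction n with
  | zero => simp [freezeBlock, len_top]
  | succ t ih =>
    have h := len_freezeAux t L L
    have : (freezeBlock L (t+1)).len = (freezeAux t L L).len + (freezeBlock L t).len + 1 := rfl
    rw [this]
    have : (t+1)*(14*L+5) = t*(14*L+5) + (14*L+5) := by ring
    omega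

lemma len_exBlock (j L n) : (exBlock j L n).len ≤ n*(3*L+6) + 4 := by
  induction n with
  | zero => simp [exBlock, len_top]
  | succ t ih =>
    have h := len_code j L t
    have : (exBlock j L (t+1)).len = ((code j L t).len + 1) + (exBlock j L t).len + 1 := rfl
    rw [this]
    have : (t+1)*(3*L+6) = t*(3*L+6) + (3*L+6) := by ring
    omega

lemma len_psi (j L m) : (psi j L m).len ≤ m*(3*L+6) + j*(14*L+5) + 9 := by
  have h1 := len_exBlock j L m
  have h2 := len_freezeBlock L j
  have : (psi j L m).len = (exBlock j L m).len + (freezeBlock L j).len + 1 := rfl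
  omega

lemma len_chain (L m r : ℕ) : ∀ j, (chain L m j r).len ≤ r*(m*(3*L+6) + (j+r)*(14*L+5) + 11) + 4 := by
  induction r with
  | zero => intro j; simp [chain, len_top]
  | succ r ih =>
    intro j
    have h1 := len_psi j L m
    have h2 := ih (j+1)
    have h3 : (chain L m j (r+1)).len = (psi j L m).len + ((chain L m (j+1) r).len + 1) + 1 := rfl
    rw [h3]
    have e1 : j + 1 + r = j + (r+1) := by ring
    rw [e1] at h2
    nlinarith [Nat.zero_le ((j+(r+1))*(14*L+5)), Nat.mul_le_mul_left j (Nat.le_refl (14*L+5))]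

lemma len_final (L m k : ℕ) (hm : 2 ≤ m) (hk : 1 ≤ k) (hL : 1 ≤ L) :
    (chain L m 0 k).len ≤ 50 * k^2 * m * L := by
  have h := len_chain L m k 0
  have h2 : k*(m*(3*L+6) + (0+k)*(14*L+5) + 11) + 4 ≤ 50*k^2*m*L := by
    have hkk : k ≤ k*k := by
      calc k = k*1 := (Nat.mul_one k).symm
      _ ≤ k*k := Nat.mul_le_mul (le_refl k) hk
    have hmL : m ≤ m*L := by
      calc m = m*1 := (Nat.mul_one m).symm
      _ ≤ m*L := Nat.mul_le_mul (le_refl m) hL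
    have hL' : L ≤ m*L := by
      calc L = 1*L := (Nat.one_mul L).symm
      _ ≤ m*L := Nat.mul_le_mul (by omega) (le_refl L)
    have t1 : k*(m*L) ≤ (k*k)*(m*L) := Nat.mul_le_mul hkk (le_refl _)
    have t2 : k*m ≤ (k*k)*(m*L) := Nat.mul_le_mul hkk hmL
    have t3 : (k*k)*L ≤ (k*k)*(m*L) := Nat.mul_le_mul (le_refl _) hL'
    have t4 : k*k ≤ (k*k)*(m*L) := by
      calc k*k = (k*k)*1 := (Nat.mul_one _).symm
      _ ≤ (k*k)*(m*L) := Nat.mul_le_mul (le_refl _) (by nlinarith)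
    have t5 : k ≤ (k*k)*(m*L) := le_trans hkk t4
    have t6 : 1 ≤ (k*k)*(m*L) := le_trans hk t5
    nlinarith [t1, t2, t3, t4, t5, t6]
  omega

/-! ### Path machinery -/

def stepPath {W : Type} (next : W → W) (w u : W) : ℕ → W
  | 0 => w
  | 1 => u
  | n+2 => next (stepPath next w u (n+1))

lemma path_of_step {W : Type} {R : W → W → Prop} (hS : Serial R) {w u : W} (hR : R w u) :
    ∃ π : ℕ → W, IsPath R π ∧ π 0 = w ∧ π 1 = u := by
  choose next hnext using hS
  refine ⟨stepPath next w u, ?_, rfl, rfl⟩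
  intro i
  match i with
  | 0 => exact hR
  | n+1 => exact hnext _

lemma sat_AX_elim {W : Type} {K : Kripke W} (hS : Serial K.R) {φ : CTL} {w u : W}
    (h : sat K (.AX φ) w) (hR : K.R w u) : sat K φ u := by
  obtain ⟨π, hπ, h0, h1⟩ := path_of_step hS hR
  have := h π hπ h0
  rwa [h1] at this

lemma sat_EX_intro {W : Type} {K : Kripke W} (hS : Serial K.R) {φ : CTL} {w u : W}
    (hR : K.R w u) (h : sat K φ u) : sat K (.EX φ) w := by
  obtain ⟨π, hπ, h0, h1⟩ := path_of_step hS hR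
  exact ⟨π, hπ, h0, by rwa [h1]⟩

lemma sat_EX_elim {W : Type} {K : Kripke W} {φ : CTL} {w : W}
    (h : sat K (.EX φ) w) : ∃ u, K.R w u ∧ sat K φ u := by
  obtain ⟨π, hπ, h0, h1⟩ := h
  exact ⟨π 1, h0 ▸ hπ 0, h1⟩

/-! ### Satisfaction lemmas for the building blocks -/

variable {W : Type} {K : Kripke W}

lemma sat_top (w : W) : sat K top w := by
  show sat K (.atom 0) w ∨ ¬ sat K (.atom 0) w
  exact Classical.em _

lemma sat_lit {p b} {w : W} : sat K (lit p b) w ↔ (K.V p w ↔ b = true) := by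
  cases b <;> simp [lit, sat]

lemma sat_codeAux {i L v n} {w : W} :
    sat K (codeAux i L v n) w ↔ ∀ t, t < n → (K.V (i*L+t) w ↔ v.testBit t = true) := by
  induction n with
  | zero => exact ⟨fun _ t ht => absurd ht (Nat.not_lt_zero t), fun _ => sat_top w⟩
  | succ t ih =>
    show sat K (lit (i*L+t) (v.testBit t)) w ∧ sat K (codeAux i L v t) w ↔ _
    rw [sat_lit, ih]
    constructor
    · rintro ⟨h1, h2⟩ t' ht'
      rcases Nat.lt_succ_iff_lt_or_eq.mp ht' with h | h
      · exact h2 t' h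
      · subst h; exact h1
    · intro h
      exact ⟨h t (Nat.lt_succ_self t), fun t' ht' => h t' (Nat.lt_succ_of_lt ht')⟩

lemma sat_code {i L v} {w : W} :
    sat K (code i L v) w ↔ ∀ t, t < L → (K.V (i*L+t) w ↔ v.testBit t = true) :=
  sat_codeAux

lemma sat_freeze_elim (hS : Serial K.R) {p} {w u : W}
    (h : sat K (freeze p) w) (hR : K.R w u) : K.V p u ↔ K.V p w := by
  obtain ⟨h1, h2⟩ := h
  by_cases hV : K.V p w
  · rcases h1 with h1 | h1
    · exact absurd hV h1
    · exact iff_of_true (sat_AX_elim hS h1 hR) hV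
  · rcases h2 with h2 | h2
    · exact absurd (show ¬¬K.V p w from h2) (by simpa using hV)
    · have := sat_AX_elim hS h2 hR
      simp only [sat] at this
      simp [hV, this]

lemma sat_freezeAux_elim (hS : Serial K.R) {s L n} {w u : W}
    (h : sat K (freezeAux s L n) w) (hR : K.R w u) :
    ∀ t, t < n → (K.V (s*L+t) u ↔ K.V (s*L+t) w) := by
  induction n with
  | zero => intro t ht; omega
  | succ n ih =>
    obtain ⟨h1, h2⟩ := h
    intro t ht
    rcases Nat.lt_succ_iff_lt_or_eq.mp ht with h | h
    · exact ih h2 t h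
    · subst h; exact sat_freeze_elim hS h1 hR

lemma sat_freezeBlock_elim (hS : Serial K.R) {L n} {w u : W}
    (h : sat K (freezeBlock L n) w) (hR : K.R w u) :
    ∀ s, s < n → ∀ t, t < L → (K.V (s*L+t) u ↔ K.V (s*L+t) w) := by
  induction n with
  | zero => intro s hs; omega
  | succ n ih =>
    obtain ⟨h1, h2⟩ := h
    intro s hs t ht
    rcases Nat.lt_succ_iff_lt_or_eq.mp hs with h | h
    · exact ih h2 s h t ht
    · subst h; exact sat_freezeAux_elim hS h1 hR t ht

lemma sat_exBlock_elim {j L n} {w : W} (h : sat K (exBlock j L n) w) :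
    ∀ v, v < n → ∃ u, K.R w u ∧ sat K (code j L v) u := by
  induction n with
  | zero => intro v hv; omega
  | succ n ih =>
    obtain ⟨h1, h2⟩ := h
    intro v hv
    rcases Nat.lt_succ_iff_lt_or_eq.mp hv with h | h
    · exact ih h2 v h
    · subst h; exact sat_EX_elim h1

/-! ### Main semantic lemma -/

lemma chain_sem (hS : Serial K.R) (L m : ℕ) (r : ℕ) :
    ∀ j (w : W), sat K (chain L m j r) w → ∀ a : ℕ → ℕ, (∀ s, a s < m) →
    ∃ u : W,
      (∀ s, s < r → ∀ t, t < L → (K.V ((j+s)*L+t) u ↔ (a s).testBit t = true)) ∧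
      (∀ s', s' < j → ∀ t, t < L → (K.V (s'*L+t) u ↔ K.V (s'*L+t) w)) := by
  induction r with
  | zero =>
    intro j w _ a _
    exact ⟨w, fun s hs => by omega, fun s' _ t _ => Iff.rfl⟩
  | succ r ih =>
    intro j w h a ha
    obtain ⟨⟨hex, hfr⟩, hax⟩ :
        (sat K (exBlock j L m) w ∧ sat K (freezeBlock L j) w) ∧
        sat K (.AX (chain L m (j+1) r)) w := h
    obtain ⟨u₁, hR, hc⟩ := sat_exBlock_elim hex (a 0) (ha 0)
    have hch : sat K (chain L m (j+1) r) u₁ := sat_AX_elim hS hax hR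
    obtain ⟨u, hu1, hu2⟩ := ih (j+1) u₁ hch (fun s => a (s+1)) (fun s => ha (s+1))
    refine ⟨u, ?_, ?_⟩
    · intro s hs t ht
      match s with
      | 0 =>
        have e : j + 0 = j := by omega
        rw [e]
        rw [hu2 j (Nat.lt_succ_self j) t ht]
        exact sat_code.mp hc t ht
      | s'+1 =>
        have e : j + (s'+1) = (j+1) + s' := by omega
        rw [e]
        exact hu1 s' (by omega) t ht
    · intro s' hs' t ht
      rw [hu2 s' (by omega) t ht]
      exact sat_freezeBlock_elim hS hfr hR s' hs' t ht

lemma testBit_ext {x y L : ℕ} (hx : x < 2^L) (hy : y < 2^L)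
    (h : ∀ t, t < L → x.testBit t = y.testBit t) : x = y := by
  apply Nat.eq_of_testBit_eq
  intro t
  by_cases ht : t < L
  · exact h t ht
  · have hL : 2^L ≤ 2^t := Nat.pow_le_pow_right (by omega) (by omega)
    rw [Nat.testBit_lt_two_pow (lt_of_lt_of_le hx hL),
        Nat.testBit_lt_two_pow (lt_of_lt_of_le hy hL)]

/-! ### The concrete model -/

abbrev MW : Type := ℕ × (ℕ → ℕ)

def modelR : MW → MW → Prop :=
  fun w u => u.1 = w.1 + 1 ∧ ∀ s, s ≠ w.1 → u.2 s = w.2 s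

def modelK (L : ℕ) : Kripke MW :=
  ⟨modelR, fun p w => (w.2 (p / L)).testBit (p % L) = true⟩

lemma modelR_serial : Serial modelR :=
  fun w => ⟨(w.1 + 1, w.2), rfl, fun _ _ => rfl⟩

lemma idx_div {s t L : ℕ} (ht : t < L) : (s*L+t) / L = s := by
  have hL : 0 < L := by omega
  rw [Nat.mul_comm s L, Nat.mul_add_div hL, Nat.div_eq_of_lt ht, Nat.add_zero]

lemma idx_mod {s t L : ℕ} (ht : t < L) : (s*L+t) % L = t := by
  rw [Nat.mul_comm s L, Nat.mul_add_mod, Nat.mod_eq_of_lt ht]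

lemma modelV {L s t : ℕ} (ht : t < L) (w : MW) :
    (modelK L).V (s*L+t) w ↔ (w.2 s).testBit t = true := by
  show (w.2 ((s*L+t) / L)).testBit ((s*L+t) % L) = true ↔ _
  rw [idx_div ht, idx_mod ht]

lemma model_sat_freeze {L p : ℕ} {d : ℕ} {f : ℕ → ℕ} (hd : p / L ≠ d) :
    sat (modelK L) (freeze p) (d, f) := by
  have key : ∀ u : MW, modelR (d, f) u → ((modelK L).V p u ↔ (modelK L).V p (d, f)) := by
    rintro u ⟨_, hu⟩
    show (u.2 (p / L)).testBit (p % L) = true ↔ (f (p / L)).testBit (p % L) = true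
    rw [hu _ hd]
  by_cases hV : (modelK L).V p (d, f)
  · constructor
    · right
      intro π hπ h0
      have := key (π 1) (h0 ▸ hπ 0)
      exact this.mpr hV
    · left
      show ¬¬ (modelK L).V p (d, f)
      exact not_not_intro hV
  · constructor
    · left; exact hV
    · right
      intro π hπ h0
      have := key (π 1) (h0 ▸ hπ 0)
      show ¬ (modelK L).V p (π 1)
      rw [this]; exact hV

lemma model_sat_freezeAux {L s n : ℕ} {d : ℕ} {f : ℕ → ℕ} (hs : s ≠ d) (hn : n ≤ L) :
    sat (modelK L) (freezeAux s L n) (d, f) := by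
  induction n with
  | zero => exact sat_top _
  | succ t ih =>
    exact ⟨model_sat_freeze (by rw [idx_div (by omega : t < L)]; exact hs), ih (by omega)⟩

lemma model_sat_freezeBlock {L n : ℕ} {d : ℕ} {f : ℕ → ℕ} (hn : n ≤ d) :
    sat (modelK L) (freezeBlock L n) (d, f) := by
  induction n with
  | zero => exact sat_top _
  | succ s ih =>
    exact ⟨model_sat_freezeAux (by omega) (le_refl L), ih (by omega)⟩

lemma model_sat_exBlock {L n j : ℕ} {f : ℕ → ℕ} (hL : 0 < L) :
    sat (modelK L) (exBlock j L n) (j, f) := by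
  induction n with
  | zero => exact sat_top _
  | succ v ih =>
    refine ⟨?_, ih⟩
    have hR : modelR (j, f) (j+1, Function.update f j v) :=
      ⟨rfl, fun s hs => Function.update_of_ne hs _ _⟩
    refine sat_EX_intro modelR_serial hR ?_
    rw [sat_code]
    intro t ht
    rw [modelV ht]
    show (Function.update f j v j).testBit t = true ↔ _
    rw [Function.update_self]

lemma model_sat_chain {L m : ℕ} (hL : 0 < L) (r : ℕ) :
    ∀ j (f : ℕ → ℕ), sat (modelK L) (chain L m j r) (j, f) := by
  induction r with
  | zero => intro j f; exact sat_top _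
  | succ r ih =>
    intro j f
    refine ⟨⟨model_sat_exBlock hL, model_sat_freezeBlock (le_refl j)⟩, ?_⟩
    intro π hπ h0
    obtain ⟨hd, _⟩ : modelR (j, f) (π 1) := h0 ▸ hπ 0
    have : π 1 = (j + 1, (π 1).2) := by
      ext
      · exact hd
      · rfl
    rw [this]
    exact ih (j+1) ((π 1).2)

lemma card_lower {k m L : ℕ} (hm : 2 ≤ m) (hmL : m < 2^L)
    {W : Type} [Fintype W] {K : Kripke W} {w : W}
    (hS : Serial K.R) (hsat : sat K (chain L m 0 k) w) :
    m ^ k ≤ Fintype.card W := by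
  have key : ∀ a : Fin k → Fin m, ∃ u : W,
      ∀ s : Fin k, ∀ t, t < L → (K.V ((0+(s:ℕ))*L+t) u ↔ ((a s : ℕ)).testBit t = true) := by
    intro a
    obtain ⟨u, hu1, _⟩ := chain_sem hS L m k 0 w hsat
      (fun s => if h : s < k then (a ⟨s, h⟩ : ℕ) else 0)
      (fun s => by split
                   · exact (a ⟨s, _⟩).2
                   · omega)
    refine ⟨u, fun s t ht => ?_⟩
    have h := hu1 (s : ℕ) s.2 t ht
    simpa [s.2] using h
  choose F hF using key
  have hinj : Function.Injective F := by
    intro a b hab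
    funext s
    apply Fin.ext
    apply testBit_ext (lt_trans (a s).2 hmL) (lt_trans (b s).2 hmL)
    intro t ht
    have h1 := hF a s t ht
    have h2 := hF b s t ht
    rw [hab] at h1
    have h3 : ((a s : ℕ)).testBit t = true ↔ ((b s : ℕ)).testBit t = true := by
      rw [← h1, h2]
    revert h3
    cases ((a s : ℕ)).testBit t <;> cases ((b s : ℕ)).testBit t <;> simp
  calc m ^ k = Fintype.card (Fin k → Fin m) := by
        simp [Fintype.card_fun]
    _ ≤ Fintype.card W := Fintype.card_le_of_injective F hinj

end AXLB

/-- For each `m ≥ 2` and `k ≥ 1` there is a satisfiable CTL formula using only the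
operators `AX` and `EX`, of temporal depth `k` and length `O(k² · m · log m)`, such that
every rooted serial model has at least `m^k` worlds. -/
theorem AX_nested_model_lower_bound :
    ∃ C : ℕ, 0 < C ∧ ∀ m k : ℕ, 2 ≤ m → 1 ≤ k → ∃ φ : CTL,
      OnlyAX φ ∧ φ.td = k ∧ φ.len ≤ C * k ^ 2 * m * (Nat.log 2 m + 1) ∧
      (∃ (W : Type) (K : Kripke W) (w : W), Serial K.R ∧ sat K φ w) ∧
      (∀ (W : Type) (inst : Fintype W) (K : Kripke W) (w : W),
        Serial K.R → sat K φ w → m ^ k ≤ @Fintype.card W inst) := by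
  refine ⟨50, by norm_num, ?_⟩
  intro m k hm hk
  set L := Nat.log 2 m + 1 with hLdef
  have hL : 1 ≤ L := by omega
  refine ⟨AXLB.chain L m 0 k, AXLB.onlyAX_chain L m k 0, AXLB.td_chain L m (by omega) k 0,
    AXLB.len_final L m k hm hk hL, ?_, ?_⟩
  · exact ⟨AXLB.MW, AXLB.modelK L, (0, fun _ => 0), AXLB.modelR_serial,
      AXLB.model_sat_chain (by omega) k 0 _⟩
  · intro W inst K w hS hsat
    have hmL : m < 2^L := Nat.lt_pow_succ_log_self (by norm_num) m
    exact @AXLB.card_lower k m L hm hmL W inst K w hS hsat
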